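/- With notation as in the context, fix a strictly increasing index sequence I of length r ≥ 1. If χ_I satisfies α(χ_I) + β(χ_I) = γ(χ_I), then χ_I = a·(S_I − w_I) for some a ∈ B, where S_I = ∏_j (w_{i_j} + w'_{i_j}) and w_I = w_{i_1}⋯w_{i_r} (all in the first factor). -/

import Mathlib

/-!
Common setup: `B` a commutative ℚ-algebra (playing the role of the coefficient
(graded-)commutative algebra), `ι` an ordered index set for a basis `{w_i}` of an
oddly-graded vector space `W`.  Since `W` is concentrated in odd degrees, the free
graded-commutative algebras `B ⊗ ΛW ⊗ ΛW` and `B ⊗ ΛW ⊗ ΛW ⊗ ΛW` are the exterior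
algebras over `B` on the free modules with bases indexed by `ι ⊕ ι` and `ι ⊕ ι ⊕ ι`.
-/

noncomputable section

variable (B : Type) [CommRing B] [Algebra ℚ B] (ι : Type) [LinearOrder ι]

/-- `B ⊗ ΛW ⊗ ΛW` -/
abbrev TwoFold := ExteriorAlgebra B ((ι ⊕ ι) →₀ B)

/-- `B ⊗ ΛW ⊗ ΛW ⊗ ΛW` -/
abbrev ThreeFold := ExteriorAlgebra B ((ι ⊕ ι ⊕ ι) →₀ B)

variable {B ι}

/-- `w_i`, the generator of the first `ΛW` factor of `B ⊗ ΛW ⊗ ΛW`. -/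
def w (i : ι) : TwoFold B ι := ExteriorAlgebra.ι B (Finsupp.single (Sum.inl i) 1)

/-- `w'_i`, the generator of the second `ΛW` factor of `B ⊗ ΛW ⊗ ΛW`. -/
def w' (i : ι) : TwoFold B ι := ExteriorAlgebra.ι B (Finsupp.single (Sum.inr i) 1)

/-- `w_i` in `B ⊗ ΛW ⊗ ΛW ⊗ ΛW`. -/
def u (i : ι) : ThreeFold B ι := ExteriorAlgebra.ι B (Finsupp.single (Sum.inl i) 1)

/-- `w'_i` in `B ⊗ ΛW ⊗ ΛW ⊗ ΛW`. -/
def u' (i : ι) : ThreeFold B ι := ExteriorAlgebra.ι B (Finsupp.single (Sum.inr (Sum.inl i)) 1)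

/-- `w''_i` in `B ⊗ ΛW ⊗ ΛW ⊗ ΛW`. -/
def u'' (i : ι) : ThreeFold B ι := ExteriorAlgebra.ι B (Finsupp.single (Sum.inr (Sum.inr i)) 1)

/-- The `B`-algebra map `B ⊗ ΛW ⊗ ΛW → B ⊗ ΛW ⊗ ΛW ⊗ ΛW` determined by a choice of
(module-valued) images for the generators `w_i`, `w'_i`. -/
def genMap (g : ι ⊕ ι → (ι ⊕ ι ⊕ ι) →₀ B) : TwoFold B ι →ₐ[B] ThreeFold B ι :=
  ExteriorAlgebra.lift B
    ⟨(ExteriorAlgebra.ι B).comp ((Finsupp.lift ((ι ⊕ ι ⊕ ι) →₀ B) B (ι ⊕ ι)) g),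
     fun m => by simp [ExteriorAlgebra.ι_sq_zero]⟩

/-- `α : w ↦ w, w' ↦ w'`. -/
def mapα : TwoFold B ι →ₐ[B] ThreeFold B ι :=
  genMap (Sum.elim (fun i => Finsupp.single (Sum.inl i) 1)
    (fun i => Finsupp.single (Sum.inr (Sum.inl i)) 1))

/-- `β : w ↦ w + w', w' ↦ w''`. -/
def mapβ : TwoFold B ι →ₐ[B] ThreeFold B ι :=
  genMap (Sum.elim
    (fun i => Finsupp.single (Sum.inl i) 1 + Finsupp.single (Sum.inr (Sum.inl i)) 1)
    (fun i => Finsupp.single (Sum.inr (Sum.inr i)) 1))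

/-- `γ : w ↦ w, w' ↦ w' + w''`. -/
def mapγ : TwoFold B ι →ₐ[B] ThreeFold B ι :=
  genMap (Sum.elim (fun i => Finsupp.single (Sum.inl i) 1)
    (fun i => Finsupp.single (Sum.inr (Sum.inl i)) 1 + Finsupp.single (Sum.inr (Sum.inr i)) 1))

/-- `δ : w ↦ w', w' ↦ w''`. -/
def mapδ : TwoFold B ι →ₐ[B] ThreeFold B ι :=
  genMap (Sum.elim (fun i => Finsupp.single (Sum.inr (Sum.inl i)) 1)
    (fun i => Finsupp.single (Sum.inr (Sum.inr i)) 1))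

/-- The monomial `w^ε_I = w_{i_1}^{ε_1} ⋯ w_{i_r}^{ε_r}`, where `w^0 = w` (first factor)
and `w^1 = w'` (second factor). -/
def mono {r : ℕ} (I : Fin r → ι) (ε : Fin r → Bool) : TwoFold B ι :=
  (List.ofFn fun j => if ε j then w' (I j) else w (I j)).prod

/-- `S_I = (w_{i_1} + w'_{i_1}) ⋯ (w_{i_r} + w'_{i_r})`. -/
def SI {r : ℕ} (I : Fin r → ι) : TwoFold B ι :=
  (List.ofFn fun j => w (I j) + w' (I j)).prod

-- my aux
lemma prod_ofFn_add {A : Type*} [Ring A] : ∀ (n : ℕ) (p q : Fin n → A),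
    (List.ofFn fun j => p j + q j).prod
      = ∑ s : Fin n → Bool, (List.ofFn fun j => if s j then q j else p j).prod := by
  intro n
  induction n with
  | zero => intro p q; simp
  | succ n ih =>
    intro p q
    rw [List.ofFn_succ, List.prod_cons, ih]
    rw [← Equiv.sum_comp (Fin.consEquiv (fun _ : Fin (n+1) => Bool))]
    rw [Fintype.sum_prod_type, Fintype.sum_bool]
    simp only [Fin.consEquiv_apply, List.ofFn_succ, List.prod_cons, Fin.cons_zero, Fin.cons_succ,
      if_true, if_false]
    rw [← Finset.mul_sum, ← Finset.mul_sum, add_mul, add_comm]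
    simp

lemma genMap_ι (g : ι ⊕ ι → (ι ⊕ ι ⊕ ι) →₀ B) (x : ι ⊕ ι) :
    genMap g (ExteriorAlgebra.ι B (Finsupp.single x (1:B))) = ExteriorAlgebra.ι B (g x) := by
  simp [genMap, ExteriorAlgebra.lift_ι_apply]

lemma genMap_listProd {r : ℕ} (g : ι ⊕ ι → (ι ⊕ ι ⊕ ι) →₀ B) (v : Fin r → ι ⊕ ι) :
    genMap g ((List.ofFn fun j => ExteriorAlgebra.ι B (Finsupp.single (v j) (1:B))).prod)
      = (List.ofFn fun j => ExteriorAlgebra.ι B (g (v j))).prod := by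
  rw [map_list_prod, List.map_ofFn]
  exact congrArg List.prod (congrArg List.ofFn (funext fun j => genMap_ι g (v j)))

lemma mono_eq {r : ℕ} (I : Fin r → ι) (ε : Fin r → Bool) :
    (mono I ε : TwoFold B ι) = (List.ofFn fun j =>
      ExteriorAlgebra.ι B (Finsupp.single (if ε j then Sum.inr (I j) else Sum.inl (I j)) (1:B))).prod := by
  unfold mono
  refine congrArg List.prod (congrArg List.ofFn (funext fun j => ?_))
  by_cases h : ε j <;> simp [h, w, w']

def code (k : Fin 3) (i : ι) : ι ⊕ ι ⊕ ι :=
  if k = 0 then Sum.inl i else if k = 1 then Sum.inr (Sum.inl i) else Sum.inr (Sum.inr i)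

lemma code_eq_iff (k k' : Fin 3) (i i' : ι) : code k i = code k' i' ↔ k = k' ∧ i = i' := by
  fin_cases k <;> fin_cases k' <;> simp [code]

def detF {r : ℕ} (I : Fin r → ι) (ζ : Fin r → Fin 3) : ((ι ⊕ ι ⊕ ι) →₀ B) [⋀^Fin r]→ₗ[B] B :=
  (Matrix.detRowAlternating (R := B) (n := Fin r)).compLinearMap
    (LinearMap.pi fun j => Finsupp.lapply (code (ζ j) (I j)))

def phi {r : ℕ} (I : Fin r → ι) (ζ : Fin r → Fin 3) : ThreeFold B ι →ₗ[B] B :=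
  ExteriorAlgebra.liftAlternating
    (Function.update (fun n => (0 : ((ι ⊕ ι ⊕ ι) →₀ B) [⋀^Fin n]→ₗ[B] B)) r (detF I ζ))

lemma phi_prod {r : ℕ} (I : Fin r → ι) (ζ : Fin r → Fin 3) (v : Fin r → ((ι ⊕ ι ⊕ ι) →₀ B)) :
    phi I ζ ((List.ofFn fun j => ExteriorAlgebra.ι B (v j)).prod)
      = Matrix.det (Matrix.of fun i j => v i (code (ζ j) (I j))) := by
  rw [← ExteriorAlgebra.ιMulti_apply, phi, ExteriorAlgebra.liftAlternating_apply_ιMulti,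
    Function.update_self]
  rfl

lemma det_diag_of {r : ℕ} (A : Matrix (Fin r) (Fin r) B) (h : ∀ i j, i ≠ j → A i j = 0) :
    A.det = ∏ j, A j j := by
  have hA : A = Matrix.diagonal (fun j => A j j) := by
    ext i j
    by_cases hij : i = j
    · subst hij; simp
    · simp [Matrix.diagonal_apply_ne _ hij, h i j hij]
  conv_lhs => rw [hA, Matrix.det_diagonal]

lemma phi_genMap_mono {r : ℕ} (I : Fin r → ι) (ζ : Fin r → Fin 3) (ε : Fin r → Bool)
    (g : ι ⊕ ι → (ι ⊕ ι ⊕ ι) →₀ B) (d : Fin r → B)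
    (hd : ∀ i j, (g (if ε i then Sum.inr (I i) else Sum.inl (I i))) (code (ζ j) (I j))
        = if i = j then d i else 0) :
    phi I ζ (genMap g (mono I ε)) = ∏ j, d j := by
  rw [mono_eq, genMap_listProd, phi_prod, det_diag_of]
  · exact Finset.prod_congr rfl fun j _ => by rw [Matrix.of_apply, hd, if_pos rfl]
  · intro i j hij
    rw [Matrix.of_apply, hd, if_neg hij]

section eval
variable {r : ℕ} {I : Fin r → ι} (hinj : Function.Injective I)
include hinj

lemma phi_mapα_zero (ε : Fin r → Bool) :
    phi I (fun _ => (0:Fin 3)) (mapα (mono I ε)) = ∏ j, (if ε j then (0:B) else 1) := by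
  refine phi_genMap_mono I _ ε _ (fun i => if ε i then 0 else 1) ?_
  intro i j
  by_cases hij : i = j
  · subst hij
    by_cases hε : ε i <;> simp [hε, code, Finsupp.single_apply, Finsupp.add_apply]
  · have hI : I i ≠ I j := fun hh => hij (hinj hh)
    by_cases hε : ε i <;> simp [hε, hij, hI, code, Finsupp.single_apply, Finsupp.add_apply]

lemma phi_mapβ_zero (ε : Fin r → Bool) :
    phi I (fun _ => (0:Fin 3)) (mapβ (mono I ε)) = ∏ j, (if ε j then (0:B) else 1) := by
  refine phi_genMap_mono I _ ε _ (fun i => if ε i then 0 else 1) ?_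
  intro i j
  by_cases hij : i = j
  · subst hij
    by_cases hε : ε i <;> simp [hε, code, Finsupp.single_apply, Finsupp.add_apply]
  · have hI : I i ≠ I j := fun hh => hij (hinj hh)
    by_cases hε : ε i <;> simp [hε, hij, hI, code, Finsupp.single_apply, Finsupp.add_apply]

lemma phi_mapγ_zero (ε : Fin r → Bool) :
    phi I (fun _ => (0:Fin 3)) (mapγ (mono I ε)) = ∏ j, (if ε j then (0:B) else 1) := by
  refine phi_genMap_mono I _ ε _ (fun i => if ε i then 0 else 1) ?_
  intro i j
  by_cases hij : i = j
  · subst hij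
    by_cases hε : ε i <;> simp [hε, code, Finsupp.single_apply, Finsupp.add_apply]
  · have hI : I i ≠ I j := fun hh => hij (hinj hh)
    by_cases hε : ε i <;> simp [hε, hij, hI, code, Finsupp.single_apply, Finsupp.add_apply]

lemma phi_mapα_two (ε0 ε : Fin r → Bool) (j0 : Fin r) (hj0 : ε0 j0 = true) :
    phi I (fun j => if ε0 j then (2:Fin 3) else 1) (mapα (mono I ε)) = (0:B) := by
  have key : phi I (fun j => if ε0 j then (2:Fin 3) else 1) (mapα (mono I ε))
      = ∏ j, (if ε j then (if ε0 j then (0:B) else 1) else 0) := by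
    refine phi_genMap_mono I _ ε _ (fun i => if ε i then (if ε0 i then 0 else 1) else 0) ?_
    intro i j
    by_cases hij : i = j
    · subst hij
      by_cases hε : ε i <;> by_cases hε0 : ε0 i <;>
        simp [hε, hε0, code, Finsupp.single_apply, Finsupp.add_apply]
    · have hI : I i ≠ I j := fun hh => hij (hinj hh)
      by_cases hε : ε i <;> by_cases hε0 : ε0 j <;>
        simp [hε, hε0, hij, hI, code, Finsupp.single_apply, Finsupp.add_apply]
  rw [key]
  refine Finset.prod_eq_zero (Finset.mem_univ j0) ?_
  by_cases hε : ε j0 <;> simp [hε, hj0]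

lemma phi_mapβ_two (ε0 ε : Fin r → Bool) :
    phi I (fun j => if ε0 j then (2:Fin 3) else 1) (mapβ (mono I ε))
      = ∏ j, (if ε j = ε0 j then (1:B) else 0) := by
  refine phi_genMap_mono I _ ε _ (fun i => if ε i = ε0 i then 1 else 0) ?_
  intro i j
  by_cases hij : i = j
  · subst hij
    by_cases hε : ε i <;> by_cases hε0 : ε0 i <;>
      simp [hε, hε0, code, Finsupp.single_apply, Finsupp.add_apply]
  · have hI : I i ≠ I j := fun hh => hij (hinj hh)
    by_cases hε : ε i <;> by_cases hε0 : ε0 j <;>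
      simp [hε, hε0, hij, hI, code, Finsupp.single_apply, Finsupp.add_apply]

lemma phi_mapγ_two (ε0 ε : Fin r → Bool) :
    phi I (fun j => if ε0 j then (2:Fin 3) else 1) (mapγ (mono I ε))
      = ∏ j, (if ε j then (1:B) else 0) := by
  refine phi_genMap_mono I _ ε _ (fun i => if ε i then 1 else 0) ?_
  intro i j
  by_cases hij : i = j
  · subst hij
    by_cases hε : ε i <;> by_cases hε0 : ε0 i <;>
      simp [hε, hε0, code, Finsupp.single_apply, Finsupp.add_apply]
  · have hI : I i ≠ I j := fun hh => hij (hinj hh)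
    by_cases hε : ε i <;> by_cases hε0 : ε0 j <;>
      simp [hε, hε0, hij, hI, code, Finsupp.single_apply, Finsupp.add_apply]

end eval

section assemble
variable {r : ℕ}

lemma prod_zero_one (ε : Fin r → Bool) :
    (∏ j, if ε j then (0:B) else 1) = if ε = (fun _ => false) then 1 else 0 := by
  by_cases h : ε = fun _ => false
  · simp [h]
  · have hj : ∃ j, ε j = true := by
      by_contra hc
      push_neg at hc
      exact h (funext fun j => by simpa using hc j)
    obtain ⟨j, hj⟩ := hj
    rw [if_neg h]
    exact Finset.prod_eq_zero (Finset.mem_univ j) (by simp [hj])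

lemma prod_ind (ε ε' : Fin r → Bool) :
    (∏ j, if ε j = ε' j then (1:B) else 0) = if ε = ε' then 1 else 0 := by
  rw [Finset.prod_boole]
  simp [funext_iff]

lemma prod_true (ε : Fin r → Bool) :
    (∏ j, if ε j then (1:B) else 0) = if ε = (fun _ => true) then 1 else 0 := by
  rw [Finset.prod_boole]
  simp [funext_iff]

lemma sum_mul_ind (a : (Fin r → Bool) → B) (e0 : Fin r → Bool) :
    ∑ ε : Fin r → Bool, a ε * (if ε = e0 then (1:B) else 0) = a e0 := by
  simp only [mul_ite, mul_one, mul_zero]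
  rw [Finset.sum_ite_eq' Finset.univ e0 a]
  simp

lemma SI_sum (I : Fin r → ι) : (SI I : TwoFold B ι) = ∑ ε : Fin r → Bool, mono I ε := by
  unfold SI
  rw [prod_ofFn_add]
  rfl

end assemble

/-- Lemma `alpha beta gamma`, part (A): for a strictly increasing index
sequence `I` of length `r ≥ 1`, if `χ_I` satisfies `α(χ_I) + β(χ_I) = γ(χ_I)`, then
`χ_I = a • (S_I − w_I)` for some `a ∈ B`, where `w_I = w_{i_1}⋯w_{i_r}` (first factor). -/
theorem stmt4 (r : ℕ) (hr : 1 ≤ r) (I : Fin r → ι) (hI : StrictMono I)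
    (a : (Fin r → Bool) → B)
    (h : mapα (∑ ε : Fin r → Bool, a ε • mono I ε : TwoFold B ι) +
        mapβ (∑ ε : Fin r → Bool, a ε • mono I ε) =
      mapγ (∑ ε : Fin r → Bool, a ε • mono I ε)) :
    ∃ c : B, (∑ ε : Fin r → Bool, a ε • mono I ε : TwoFold B ι) =
      c • (SI I - mono I (fun _ => false)) := by
  have hinj := hI.injective
  have hphi : ∀ ζ : Fin r → Fin 3,
      (∑ ε : Fin r → Bool, a ε * phi I ζ (mapα (mono I ε))) +
        (∑ ε : Fin r → Bool, a ε * phi I ζ (mapβ (mono I ε)))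
        = ∑ ε : Fin r → Bool, a ε * phi I ζ (mapγ (mono I ε)) := by
    intro ζ
    have h' := congrArg (phi I ζ) h
    simpa only [map_add, map_sum, map_smul, smul_eq_mul] using h'
  set c := a (fun _ => true) with hc
  have h0 : a (fun _ => false) = 0 := by
    have e := hphi (fun _ => 0)
    simp only [phi_mapα_zero hinj, phi_mapβ_zero hinj, phi_mapγ_zero hinj,
      prod_zero_one, sum_mul_ind] at e
    exact add_eq_right.mp e
  have htrue : ∀ ε0 : Fin r → Bool, (∃ j0, ε0 j0 = true) → a ε0 = c := by
    rintro ε0 ⟨j0, hj0⟩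
    have e := hphi (fun j => if ε0 j then 2 else 1)
    simp only [phi_mapα_two hinj ε0 _ j0 hj0, phi_mapβ_two hinj, phi_mapγ_two hinj,
      prod_ind, prod_true, sum_mul_ind, mul_zero, Finset.sum_const_zero, zero_add] at e
    exact e
  have ha : ∀ ε : Fin r → Bool, a ε = if ε = (fun _ => false) then 0 else c := by
    intro ε
    by_cases hh : ε = fun _ => false
    · rw [if_pos hh, hh, h0]
    · rw [if_neg hh]
      apply htrue
      by_contra hcon
      push_neg at hcon
      exact hh (funext fun j => by simpa using hcon j)
  refine ⟨c, ?_⟩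
  rw [SI_sum, smul_sub, Finset.smul_sum]
  have step : ∀ ε : Fin r → Bool, a ε • mono I ε
      = c • (mono I ε : TwoFold B ι) - (if ε = (fun _ => false) then c else 0) • mono I ε := by
    intro ε
    rw [ha ε]
    by_cases hh : ε = fun _ => false
    · simp [hh]
    · simp [hh]
  calc ∑ ε : Fin r → Bool, a ε • mono I ε
      = ∑ ε : Fin r → Bool, (c • (mono I ε : TwoFold B ι)
          - (if ε = (fun _ => false) then c else 0) • mono I ε) :=
        Finset.sum_congr rfl fun ε _ => step ε
    _ = (∑ ε : Fin r → Bool, c • (mono I ε : TwoFold B ι))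
          - ∑ ε : Fin r → Bool, (if ε = (fun _ => false) then c else 0) • mono I ε :=
        Finset.sum_sub_distrib _ _
    _ = (∑ ε : Fin r → Bool, c • (mono I ε : TwoFold B ι)) - c • mono I (fun _ => false) := by
        congr 1
        simp only [ite_smul, zero_smul]
        rw [Finset.sum_ite_eq' Finset.univ (fun _ => false) (fun ε => c • mono I ε)]
        simp
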